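/- Let c = (c₁,c₂) ∈ ℂ², let I = (α₁,α₂) and J = (β₁,β₂) be pairs of nonnegative integers, let a, b ∈ ℂ be not both zero, and let m₁, m₂, n₁, n₂ be positive integers with m₁m₂ > n₁n₂. Then there is no pair (f₁,f₂) of transcendental entire functions of finite order on ℂ² satisfying, for all z ∈ ℂ², (a·∂^I f₁(z) + b·∂^J f₁(z))^{n₁} + f₂(z+c)^{m₁} = 1 and (a·∂^I f₂(z) + b·∂^J f₂(z))^{n₂} + f₁(z+c)^{m₂} = 1. -/

import Mathlib

/-- A function on ℂ² is entire if it is holomorphic everywhere. -/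
def Entire2 (f : ℂ × ℂ → ℂ) : Prop := Differentiable ℂ f

/-- A function on ℂ² is transcendental if it is not a polynomial function. -/
def Transcendental2 (f : ℂ × ℂ → ℂ) : Prop :=
  ¬ ∃ p : MvPolynomial (Fin 2) ℂ, ∀ z : ℂ × ℂ, f z = MvPolynomial.eval ![z.1, z.2] p

/-- A function on ℂ² is of finite order if |f(z)| ≤ exp(‖z‖^ρ) for all large ‖z‖. -/
def FiniteOrder2 (f : ℂ × ℂ → ℂ) : Prop :=
  ∃ ρ > (0 : ℝ), ∃ R > (0 : ℝ), ∀ z : ℂ × ℂ, R ≤ ‖z‖ → ‖f z‖ ≤ Real.exp (‖z‖ ^ ρ)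

/-- Partial derivative with respect to the first variable. -/
noncomputable def pd1 (f : ℂ × ℂ → ℂ) : ℂ × ℂ → ℂ := fun z => fderiv ℂ f z (1, 0)

/-- Partial derivative with respect to the second variable. -/
noncomputable def pd2 (f : ℂ × ℂ → ℂ) : ℂ × ℂ → ℂ := fun z => fderiv ℂ f z (0, 1)

/-- Iterated partial derivative `∂^{α₁+α₂} f / ∂z₁^{α₁} ∂z₂^{α₂}`. -/
noncomputable def partialI (α₁ α₂ : ℕ) (f : ℂ × ℂ → ℂ) : ℂ × ℂ → ℂ :=
  pd1^[α₁] (pd2^[α₂] f)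

set_option maxHeartbeats 1000000

open Metric Real Complex MeasureTheory intervalIntegral Set Filter
open scoped Topology

namespace My


lemma hasDerivAt_slice1 {f : ℂ × ℂ → ℂ} (hf : Differentiable ℂ f) (z : ℂ × ℂ) :
    HasDerivAt (fun t => f (t, z.2)) (pd1 f z) z.1 := by
  have h1 : HasDerivAt (fun t : ℂ => (t, z.2)) ((1 : ℂ), (0 : ℂ)) z.1 :=
    (hasDerivAt_id z.1).prodMk (hasDerivAt_const z.1 z.2)
  have h2 : HasFDerivAt f (fderiv ℂ f (z.1, z.2)) (z.1, z.2) := (hf (z.1, z.2)).hasFDerivAt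
  simpa [pd1, Function.comp_def] using h2.comp_hasDerivAt z.1 h1

lemma norm_pd1_le {f : ℂ × ℂ → ℂ} (hf : Differentiable ℂ f) (z : ℂ × ℂ) {C : ℝ}
    (hC : ∀ w : ℂ × ℂ, ‖w - z‖ ≤ 1 → ‖f w‖ ≤ C) : ‖pd1 f z‖ ≤ C := by
  have hd : Differentiable ℂ (fun t => f (t, z.2)) :=
    fun t => (hasDerivAt_slice1 hf (t, z.2)).differentiableAt
  have key : ‖deriv (fun t => f (t, z.2)) z.1‖ ≤ C / 1 := by
    apply Complex.norm_deriv_le_of_forall_mem_sphere_norm_le one_pos hd.diffContOnCl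
    intro u hu
    apply hC
    have hn : ‖(u, z.2) - z‖ = ‖u - z.1‖ := by simp [Prod.norm_def]
    rw [hn]
    simpa [dist_eq_norm] using (mem_sphere_iff_norm.1 hu).le
  rw [div_one] at key
  rwa [(hasDerivAt_slice1 hf z).deriv] at key

noncomputable def g (f : ℂ × ℂ → ℂ) (a : ℂ × ℂ) (z : ℂ × ℂ) (θ : ℝ) : ℂ :=
  (2 * (π : ℂ) * Complex.I)⁻¹ * ((circleMap 0 2 θ * Complex.I) *
    (((circleMap a.1 2 θ - z.1) ^ 2)⁻¹ * f (circleMap a.1 2 θ, z.2)))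

variable {f : ℂ × ℂ → ℂ} (a : ℂ × ℂ)

lemma circleMap_sub_ne (x : ℂ) (hx : x ∈ ball a.1 2) (θ : ℝ) : circleMap a.1 2 θ - x ≠ 0 := by
  intro h
  have h2 : circleMap a.1 2 θ ∈ sphere a.1 2 := circleMap_mem_sphere a.1 (by norm_num) θ
  rw [sub_eq_zero] at h
  rw [h] at h2
  exact absurd (mem_sphere.1 h2) (by simpa using (mem_ball.1 hx).ne)

lemma norm_circleMap_sub_ge (x : ℂ) (θ : ℝ) :
    2 - dist x a.1 ≤ ‖circleMap a.1 2 θ - x‖ := by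
  have h2 : dist (circleMap a.1 2 θ) a.1 = 2 := by
    simpa using mem_sphere.1 (circleMap_mem_sphere a.1 (by norm_num) θ)
  have := dist_triangle (circleMap a.1 2 θ) x a.1
  rw [← dist_eq_norm]
  linarith

lemma continuous_g_aux (hf : Differentiable ℂ f) (x : ℂ) (hx : x ∈ ball a.1 2) (y : ℂ) :
    Continuous (fun θ => g f a (x, y) θ) := by
  apply continuous_const.mul
  apply Continuous.mul
  · exact (continuous_circleMap 0 2).mul continuous_const
  · apply Continuous.mul
    · apply Continuous.inv₀
      · exact ((continuous_circleMap a.1 2).sub continuous_const).pow 2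
      · intro θ
        exact pow_ne_zero 2 (circleMap_sub_ne a x hx θ)
    · exact hf.continuous.comp ((continuous_circleMap a.1 2).prodMk continuous_const)

lemma exists_circle_bound (hf : Differentiable ℂ f) (y : ℂ) :
    ∃ C : ℝ, 0 ≤ C ∧ ∀ θ : ℝ, ‖f (circleMap a.1 2 θ, y)‖ ≤ C := by
  obtain ⟨C, hC⟩ := (isCompact_sphere a.1 2).exists_bound_of_continuousOn
    ((hf.continuous.comp (continuous_id.prodMk continuous_const)).continuousOn
      (s := sphere a.1 2))
  refine ⟨max C 0, le_max_right _ _, fun θ => ?_⟩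
  exact le_trans (hC _ (circleMap_mem_sphere a.1 (by norm_num) θ)) (le_max_left _ _)

/-- Step 1a: Cauchy representation of pd1 f on the ball. -/
lemma pd1_rep (hf : Differentiable ℂ f) (z : ℂ × ℂ) (hz : z.1 ∈ ball a.1 2) :
    pd1 f z = ∫ θ in (0:ℝ)..(2 * π), g f a z θ := by
  classical
  set ε : ℝ := (2 - dist z.1 a.1) / 2 with hε
  have hdz : dist z.1 a.1 < 2 := mem_ball.1 hz
  have hεpos : 0 < ε := by rw [hε]; linarith
  obtain ⟨Cf, hCf0, hCf⟩ := exists_circle_bound a hf z.2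
  -- integrand for first-power kernel
  set F : ℂ → ℝ → ℂ := fun t θ => (2 * (π : ℂ) * Complex.I)⁻¹ *
    ((circleMap 0 2 θ * Complex.I) *
      ((circleMap a.1 2 θ - t)⁻¹ * f (circleMap a.1 2 θ, z.2))) with hF
  set F' : ℂ → ℝ → ℂ := fun t θ => g f a (t, z.2) θ with hF'
  have hball : ∀ x ∈ ball z.1 ε, x ∈ ball a.1 2 := by
    intro x hx
    rw [mem_ball] at hx ⊢
    have := dist_triangle x z.1 a.1
    rw [hε] at hx
    linarith
  have hmain := intervalIntegral.hasDerivAt_integral_of_dominated_loc_of_deriv_le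
    (F := F) (F' := fun x θ => F' x θ) (x₀ := z.1) (a := (0:ℝ)) (b := 2 * π)
    (μ := MeasureTheory.volume)
    (bound := fun _ => (2 * π)⁻¹ * (2 * ((ε ^ 2)⁻¹ * Cf))) (ball_mem_nhds z.1 hεpos)
    ?_ ?_ ?_ ?_ ?_ ?_
  · -- use hmain to conclude
    obtain ⟨-, hder⟩ := hmain
    -- the integral function agrees with the slice near z.1
    have hEq : (fun t => ∫ θ in (0:ℝ)..(2*π), F t θ) =ᶠ[nhds z.1] (fun t => f (t, z.2)) := by
      filter_upwards [isOpen_ball.mem_nhds hz] with t ht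
      have hdsl : DifferentiableOn ℂ (fun u => f (u, z.2)) (closedBall a.1 2) := fun w _ =>
        ((hasDerivAt_slice1 hf (w, z.2)).differentiableAt).differentiableWithinAt
      have hrep := hdsl.circleIntegral_sub_inv_smul (w := t) ht
      have : (∮ u in C(a.1, 2), (u - t)⁻¹ • f (u, z.2)) =
          ∫ θ in (0:ℝ)..(2*π), deriv (circleMap a.1 2) θ • ((circleMap a.1 2 θ - t)⁻¹ • f (circleMap a.1 2 θ, z.2)) := rfl
      rw [this] at hrep
      have h2 : ∀ θ : ℝ, deriv (circleMap a.1 2) θ •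
          ((circleMap a.1 2 θ - t)⁻¹ • f (circleMap a.1 2 θ, z.2)) =
          (circleMap 0 2 θ * Complex.I) * ((circleMap a.1 2 θ - t)⁻¹ * f (circleMap a.1 2 θ, z.2)) := by
        intro θ; rw [deriv_circleMap]; simp [smul_eq_mul]
      simp only [h2] at hrep
      calc (∫ θ in (0:ℝ)..(2*π), F t θ)
          = (2 * (π:ℂ) * Complex.I)⁻¹ * ∫ θ in (0:ℝ)..(2*π),
            ((circleMap 0 2 θ * Complex.I) * ((circleMap a.1 2 θ - t)⁻¹ * f (circleMap a.1 2 θ, z.2))) := by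
            rw [← intervalIntegral.integral_const_mul]
        _ = (2 * (π:ℂ) * Complex.I)⁻¹ * ((2 * (π:ℂ) * Complex.I) • f (t, z.2)) := by rw [hrep]
        _ = f (t, z.2) := by
            rw [smul_eq_mul, ← mul_assoc, inv_mul_cancel₀ Complex.two_pi_I_ne_zero, one_mul]
    have hder2 : HasDerivAt (fun t => f (t, z.2)) (∫ θ in (0:ℝ)..(2*π), F' z.1 θ) z.1 :=
      hder.congr_of_eventuallyEq hEq.symm
    have := (hasDerivAt_slice1 hf z).unique hder2
    rw [this]
  · -- hF_meas
    filter_upwards [isOpen_ball.mem_nhds hz] with x hx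
    apply Continuous.aestronglyMeasurable
    apply continuous_const.mul
    apply Continuous.mul
    · exact (continuous_circleMap 0 2).mul continuous_const
    · apply Continuous.mul
      · apply Continuous.inv₀
        · exact (continuous_circleMap a.1 2).sub continuous_const
        · exact fun θ => circleMap_sub_ne a x hx θ
      · exact hf.continuous.comp ((continuous_circleMap a.1 2).prodMk continuous_const)
  · -- hF_int
    apply Continuous.intervalIntegrable
    apply continuous_const.mul
    apply Continuous.mul
    · exact (continuous_circleMap 0 2).mul continuous_const
    · apply Continuous.mul
      · apply Continuous.inv₀
        · exact (continuous_circleMap a.1 2).sub continuous_const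
        · exact fun θ => circleMap_sub_ne a z.1 hz θ
      · exact hf.continuous.comp ((continuous_circleMap a.1 2).prodMk continuous_const)
  · -- hF'_meas
    exact (continuous_g_aux a hf z.1 hz z.2).aestronglyMeasurable
  · -- h_bound
    apply Filter.Eventually.of_forall
    intro θ _ x hx
    have hx2 : x ∈ ball a.1 2 := hball x hx
    have hge : ε ≤ ‖circleMap a.1 2 θ - x‖ := by
      have h1 := norm_circleMap_sub_ge a x θ
      have h2 : dist x a.1 ≤ dist x z.1 + dist z.1 a.1 := dist_triangle _ _ _
      have h3 : dist x z.1 < ε := mem_ball.1 hx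
      rw [hε] at *
      linarith
    have hnormcm : ‖circleMap 0 2 θ * Complex.I‖ = 2 := by
      simp [norm_mul]
    have hinv : ‖((circleMap a.1 2 θ - x) ^ 2)⁻¹‖ ≤ (ε ^ 2)⁻¹ := by
      rw [norm_inv, norm_pow]
      apply inv_anti₀ (by positivity)
      exact pow_le_pow_left₀ hεpos.le hge 2
    have h2pi : ‖(2 * (π:ℂ) * Complex.I)⁻¹‖ = (2*π)⁻¹ := by
      rw [norm_inv]
      simp [norm_mul, abs_of_pos Real.pi_pos]
    calc ‖F' x θ‖ = ‖(2 * (π:ℂ) * Complex.I)⁻¹‖ * (‖circleMap 0 2 θ * Complex.I‖ *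
          (‖((circleMap a.1 2 θ - x) ^ 2)⁻¹‖ * ‖f (circleMap a.1 2 θ, z.2)‖)) := by
          simp [hF', g, norm_mul]
      _ ≤ (2*π)⁻¹ * (2 * ((ε ^ 2)⁻¹ * Cf)) := by
          rw [h2pi, hnormcm]
          apply mul_le_mul_of_nonneg_left _ (by positivity)
          apply mul_le_mul_of_nonneg_left _ (by norm_num)
          exact mul_le_mul hinv (hCf θ) (norm_nonneg _) (by positivity)
  · -- bound integrable
    exact intervalIntegrable_const
  · -- h_diff
    apply Filter.Eventually.of_forall
    intro θ _ x hx
    have hx2 : x ∈ ball a.1 2 := hball x hx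
    have hne : circleMap a.1 2 θ - x ≠ 0 := circleMap_sub_ne a x hx2 θ
    have d1 : HasDerivAt (fun t : ℂ => circleMap a.1 2 θ - t) (-1) x :=
      (hasDerivAt_id x).const_sub _
    have d2 : HasDerivAt (fun t : ℂ => (circleMap a.1 2 θ - t)⁻¹)
        (-(-1) / (circleMap a.1 2 θ - x) ^ 2) x := d1.inv hne
    have d3 := (d2.mul_const (f (circleMap a.1 2 θ, z.2))).const_mul
      ((2 * (π : ℂ) * Complex.I)⁻¹ * (circleMap 0 2 θ * Complex.I))
    have heq : (2 * (π : ℂ) * Complex.I)⁻¹ * (circleMap 0 2 θ * Complex.I) *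
        (-(-1) / (circleMap a.1 2 θ - x) ^ 2 * f (circleMap a.1 2 θ, z.2)) = F' x θ := by
      simp only [hF', g]
      field_simp
    have hfun : (fun t : ℂ => (2 * (π : ℂ) * Complex.I)⁻¹ * (circleMap 0 2 θ * Complex.I) *
        ((circleMap a.1 2 θ - t)⁻¹ * f (circleMap a.1 2 θ, z.2))) = fun t => F t θ := by
      funext t; simp only [hF]; ring
    rw [heq, hfun] at d3
    exact d3


lemma hasDerivAt_slice2 {f : ℂ × ℂ → ℂ} (hf : Differentiable ℂ f) (z : ℂ × ℂ) :
    HasDerivAt (fun t => f (z.1, t)) (pd2 f z) z.2 := by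
  have h1 : HasDerivAt (fun t : ℂ => (z.1, t)) ((0 : ℂ), (1 : ℂ)) z.2 :=
    (hasDerivAt_const z.2 z.1).prodMk (hasDerivAt_id z.2)
  have h2 : HasFDerivAt f (fderiv ℂ f (z.1, z.2)) (z.1, z.2) := (hf (z.1, z.2)).hasFDerivAt
  simpa [pd2, Function.comp_def] using h2.comp_hasDerivAt z.2 h1

lemma norm_pd2_le {f : ℂ × ℂ → ℂ} (hf : Differentiable ℂ f) (z : ℂ × ℂ) {C : ℝ}
    (hC : ∀ w : ℂ × ℂ, ‖w - z‖ ≤ 1 → ‖f w‖ ≤ C) : ‖pd2 f z‖ ≤ C := by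
  have hd : Differentiable ℂ (fun t => f (z.1, t)) :=
    fun t => (hasDerivAt_slice2 hf (z.1, t)).differentiableAt
  have key : ‖deriv (fun t => f (z.1, t)) z.2‖ ≤ C / 1 := by
    apply Complex.norm_deriv_le_of_forall_mem_sphere_norm_le one_pos hd.diffContOnCl
    intro u hu
    apply hC
    have hn : ‖(z.1, u) - z‖ = ‖u - z.2‖ := by simp [Prod.norm_def]
    rw [hn]
    simpa [dist_eq_norm] using (mem_sphere_iff_norm.1 hu).le
  rw [div_one] at key
  rwa [(hasDerivAt_slice2 hf z).deriv] at key

/-- measurability of `θ ↦ pd2 f (circleMap a.1 2 θ, a.2)`. -/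
lemma sm_pd2_circle (hf : Differentiable ℂ f) :
    StronglyMeasurable (fun θ : ℝ => pd2 f (circleMap a.1 2 θ, a.2)) := by
  have hseq : ∀ n : ℕ, ((1 / ((n : ℝ) + 1) : ℝ) : ℂ) ≠ 0 := by
    intro n
    simp only [ne_eq, Complex.ofReal_eq_zero]
    positivity
  apply stronglyMeasurable_of_tendsto (u := atTop)
    (f := fun (n : ℕ) (θ : ℝ) =>
      (f (circleMap a.1 2 θ, a.2 + ((1 / ((n : ℝ) + 1) : ℝ) : ℂ)) - f (circleMap a.1 2 θ, a.2)) /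
        ((1 / ((n : ℝ) + 1) : ℝ) : ℂ))
  · intro n
    apply Continuous.stronglyMeasurable
    apply Continuous.div_const
    apply Continuous.sub
    · exact hf.continuous.comp ((continuous_circleMap a.1 2).prodMk continuous_const)
    · exact hf.continuous.comp ((continuous_circleMap a.1 2).prodMk continuous_const)
  · rw [tendsto_pi_nhds]
    intro θ
    have hd := hasDerivAt_slice2 hf (circleMap a.1 2 θ, a.2)
    rw [hasDerivAt_iff_tendsto_slope] at hd
    have hy : Tendsto (fun n : ℕ => a.2 + ((1 / ((n : ℝ) + 1) : ℝ) : ℂ)) atTop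
        (nhdsWithin a.2 {a.2}ᶜ) := by
      apply tendsto_nhdsWithin_of_tendsto_nhds_of_eventually_within
      · have h0 : Tendsto (fun n : ℕ => ((1 / ((n : ℝ) + 1) : ℝ) : ℂ)) atTop (nhds 0) := by
          rw [show ((0 : ℂ)) = ((0 : ℝ) : ℂ) by simp]
          exact (Complex.continuous_ofReal.tendsto _).comp tendsto_one_div_add_atTop_nhds_zero_nat
        simpa using tendsto_const_nhds.add h0
      · apply Filter.Eventually.of_forall
        intro n
        simp only [mem_compl_iff, mem_singleton_iff]
        intro h
        exact hseq n (add_eq_left.mp h)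
    have heq : (fun n : ℕ =>
        (f (circleMap a.1 2 θ, a.2 + ((1 / ((n : ℝ) + 1) : ℝ) : ℂ)) - f (circleMap a.1 2 θ, a.2)) /
          ((1 / ((n : ℝ) + 1) : ℝ) : ℂ)) =
        (slope (fun t => f (circleMap a.1 2 θ, t)) a.2) ∘
          (fun n : ℕ => a.2 + ((1 / ((n : ℝ) + 1) : ℝ) : ℂ)) := by
      funext n
      simp only [Function.comp_apply, slope_def_field, add_sub_cancel_left]
    rw [heq]
    exact hd.comp hy


lemma dist_fst_le' (p q : ℂ × ℂ) : dist p.1 q.1 ≤ dist p q := by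
  rw [Prod.dist_eq]; exact le_max_left _ _

lemma dist_snd_le' (p q : ℂ × ℂ) : dist p.2 q.2 ≤ dist p q := by
  rw [Prod.dist_eq]; exact le_max_right _ _

lemma norm_two_pi_I_inv : ‖(2 * (π : ℂ) * Complex.I)⁻¹‖ = (2 * π)⁻¹ := by
  rw [norm_inv]
  simp [norm_mul, abs_of_pos Real.pi_pos]

lemma norm_circleMap_mul_I (θ : ℝ) : ‖circleMap 0 2 θ * Complex.I‖ = 2 := by
  simp [norm_mul]

lemma norm_sub_fst_le (p q : ℂ × ℂ) : ‖p.1 - q.1‖ ≤ ‖p - q‖ := by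
  rw [← dist_eq_norm, ← dist_eq_norm]
  rw [Prod.dist_eq]; exact le_max_left _ _

lemma norm_sub_snd_le (p q : ℂ × ℂ) : ‖p.2 - q.2‖ ≤ ‖p - q‖ := by
  rw [← dist_eq_norm, ← dist_eq_norm]
  rw [Prod.dist_eq]; exact le_max_right _ _

lemma pd1_entire {f : ℂ × ℂ → ℂ} (hf : Differentiable ℂ f) : Differentiable ℂ (pd1 f) := by
  intro a
  -- bound for f on closedBall a 3
  obtain ⟨M0, hM0⟩ := (isCompact_closedBall (a : ℂ × ℂ) 3).exists_bound_of_continuousOn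
    hf.continuous.continuousOn
  set Mf : ℝ := max M0 0 with hMfdef
  have hMf0 : 0 ≤ Mf := le_max_right _ _
  have hMf : ∀ y ∈ closedBall a 3, ‖f y‖ ≤ Mf := fun y hy => (hM0 y hy).trans (le_max_left _ _)
  have hwdist : ∀ θ : ℝ, dist (circleMap a.1 2 θ) a.1 = 2 := by
    intro θ
    simpa using mem_sphere.1 (circleMap_mem_sphere a.1 (by norm_num) θ)
  -- membership facts
  have hmem3 : ∀ (θ : ℝ) (v : ℂ), dist v a.2 ≤ 3 → (circleMap a.1 2 θ, v) ∈ closedBall a 3 := by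
    intro θ v hv
    rw [mem_closedBall, Prod.dist_eq]
    exact max_le (by rw [hwdist θ]; norm_num) hv
  -- bound for pd2 f on the circle × small ball
  have hpd2 : ∀ (θ : ℝ) (v : ℂ), dist v a.2 ≤ 1 → ‖pd2 f (circleMap a.1 2 θ, v)‖ ≤ Mf := by
    intro θ v hv
    apply norm_pd2_le hf
    intro u hu
    apply hMf
    rw [mem_closedBall]
    calc dist u a ≤ dist u (circleMap a.1 2 θ, v) + dist (circleMap a.1 2 θ, v) a :=
          dist_triangle _ _ _
      _ ≤ 1 + 2 := by
          apply add_le_add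
          · rwa [dist_eq_norm]
          · rw [Prod.dist_eq]
            exact max_le (le_of_eq (hwdist θ)) (by linarith)
      _ ≤ 3 := by norm_num
  -- Lipschitz property of f in the second variable on the circle
  have hlipf : ∀ (θ : ℝ) (v v' : ℂ), dist v a.2 ≤ 1 → dist v' a.2 ≤ 1 →
      ‖f (circleMap a.1 2 θ, v) - f (circleMap a.1 2 θ, v')‖ ≤ Mf * ‖v - v'‖ := by
    intro θ v v' hv hv'
    have := (convex_closedBall a.2 1).norm_image_sub_le_of_norm_hasFDerivWithin_le
      (f := fun t => f (circleMap a.1 2 θ, t))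
      (f' := fun t => ContinuousLinearMap.smulRight (1 : ℂ →L[ℂ] ℂ)
        (pd2 f (circleMap a.1 2 θ, t)))
      (C := Mf) (x := v') (y := v) ?_ ?_ (mem_closedBall.2 hv') (mem_closedBall.2 hv)
    · exact this
    · intro x hx
      exact (hasDerivAt_slice2 hf (circleMap a.1 2 θ, x)).hasFDerivAt.hasFDerivWithinAt
    · intro x hx
      rw [ContinuousLinearMap.norm_smulRight_apply, norm_one, one_mul]
      exact hpd2 θ x (mem_closedBall.1 hx)
  -- the derivative integrand
  set q : ℝ → ℂ := fun θ => (2 * (π : ℂ) * Complex.I)⁻¹ * (circleMap 0 2 θ * Complex.I) with hq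
  set F' : ℝ → (ℂ × ℂ) →L[ℂ] ℂ := fun θ =>
    q θ • ((((circleMap a.1 2 θ - a.1) ^ 2)⁻¹ •
        ((pd2 f (circleMap a.1 2 θ, a.2)) • ContinuousLinearMap.snd ℂ ℂ ℂ)) +
      (f (circleMap a.1 2 θ, a.2)) •
        ((-(2 * (circleMap a.1 2 θ - a.1) ^ 1 * (-1)) / ((circleMap a.1 2 θ - a.1) ^ 2) ^ 2) •
          ContinuousLinearMap.fst ℂ ℂ ℂ)) with hF'
  have ha1 : a.1 ∈ ball a.1 2 := mem_ball_self (by norm_num)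
  have hmain := intervalIntegral.hasFDerivAt_integral_of_dominated_loc_of_lip
    (𝕜 := ℂ) (H := ℂ × ℂ) (F := fun z θ => g f a z θ) (F' := F') (x₀ := a)
    (a := (0:ℝ)) (b := 2 * π) (μ := MeasureTheory.volume)
    (bound := fun _ => 7 * Mf) (ball_mem_nhds a one_pos) ?_ ?_ ?_ ?_ ?_ ?_
  · -- conclude
    have hG : DifferentiableAt ℂ (fun z => ∫ θ in (0:ℝ)..(2*π), g f a z θ) a :=
      hmain.2.differentiableAt
    apply hG.congr_of_eventuallyEq
    filter_upwards [ball_mem_nhds a one_pos] with z hz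
    apply pd1_rep a hf z
    rw [mem_ball]
    calc dist z.1 a.1 ≤ dist z a := dist_fst_le' _ _
      _ < 2 := by linarith [mem_ball.1 hz]
  · -- hF_meas
    filter_upwards [ball_mem_nhds a one_pos] with x hx
    have hx1 : x.1 ∈ ball a.1 2 := by
      rw [mem_ball]
      calc dist x.1 a.1 ≤ dist x a := dist_fst_le' _ _
        _ < 2 := by linarith [mem_ball.1 hx]
    exact (continuous_g_aux a hf x.1 hx1 x.2).aestronglyMeasurable
  · -- hF_int
    exact (continuous_g_aux a hf a.1 ha1 a.2).intervalIntegrable _ _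
  · -- hF'_meas
    apply StronglyMeasurable.aestronglyMeasurable
    rw [hF']
    apply StronglyMeasurable.fun_smul
    · exact (continuous_const.mul ((continuous_circleMap 0 2).mul continuous_const)).stronglyMeasurable
    apply StronglyMeasurable.fun_add
    · apply StronglyMeasurable.fun_smul
      · apply Continuous.stronglyMeasurable
        apply Continuous.inv₀
        · exact ((continuous_circleMap a.1 2).sub continuous_const).pow 2
        · exact fun θ => pow_ne_zero 2 (circleMap_sub_ne a a.1 ha1 θ)
      · exact (sm_pd2_circle a hf).smul_const _
    · apply StronglyMeasurable.fun_smul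
      · exact (hf.continuous.comp
          ((continuous_circleMap a.1 2).prodMk continuous_const)).stronglyMeasurable
      · apply Continuous.stronglyMeasurable
        apply Continuous.fun_smul _ continuous_const
        apply Continuous.div
        · exact (continuous_const.mul (((continuous_circleMap a.1 2).sub continuous_const).pow 1)).mul continuous_const |>.neg
        · exact (((continuous_circleMap a.1 2).sub continuous_const).pow 2).pow 2
        · exact fun θ => pow_ne_zero 2 (pow_ne_zero 2 (circleMap_sub_ne a a.1 ha1 θ))
  · -- h_lip
    apply Filter.Eventually.of_forall
    intro θ _
    rw [lipschitzOnWith_iff_norm_sub_le]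
    intro z hz z' hz'
    have habs : |(7 : ℝ) * Mf| = 7 * Mf := abs_of_nonneg (by positivity)
    rw [Real.coe_nnabs, habs]
    -- basic facts
    have hz1 : dist z.1 a.1 < 1 := lt_of_le_of_lt (dist_fst_le' _ _) (mem_ball.1 hz)
    have hz'1 : dist z'.1 a.1 < 1 := lt_of_le_of_lt (dist_fst_le' _ _) (mem_ball.1 hz')
    have hz2 : dist z.2 a.2 ≤ 1 := le_of_lt (lt_of_le_of_lt (dist_snd_le' _ _) (mem_ball.1 hz))
    have hz'2 : dist z'.2 a.2 ≤ 1 := le_of_lt (lt_of_le_of_lt (dist_snd_le' _ _) (mem_ball.1 hz'))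
    have hq1 : ‖q θ‖ ≤ 1 := by
      have : ‖q θ‖ = (2 * π)⁻¹ * 2 := by
        rw [hq]
        rw [norm_mul, norm_two_pi_I_inv, norm_circleMap_mul_I]
      rw [this]
      have hπ : (1 : ℝ) ≤ π := by linarith [Real.pi_gt_three]
      rw [inv_mul_le_iff₀ (by positivity)]
      linarith
    set w : ℂ := circleMap a.1 2 θ with hw
    have hne : ∀ x : ℂ, dist x a.1 < 2 → w - x ≠ 0 := fun x hx =>
      circleMap_sub_ne a x (mem_ball.2 hx) θ
    have honele : ∀ x : ℂ, dist x a.1 ≤ 1 → 1 ≤ ‖w - x‖ := by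
      intro x hx
      have := norm_circleMap_sub_ge a x θ
      rw [← hw] at this
      linarith
    have hwle : ∀ x : ℂ, dist x a.1 ≤ 1 → ‖w - x‖ ≤ 3 := by
      intro x hx
      calc ‖w - x‖ ≤ ‖w - a.1‖ + ‖a.1 - x‖ := norm_sub_le_norm_sub_add_norm_sub _ _ _
        _ ≤ 2 + 1 := by
            apply add_le_add
            · rw [← dist_eq_norm]; exact le_of_eq (hwdist θ)
            · rw [← dist_eq_norm, dist_comm]; exact hx
        _ = 3 := by norm_num
    -- express the difference
    have hgz : ∀ y : ℂ × ℂ, g f a y θ = q θ * (((w - y.1) ^ 2)⁻¹ * f (w, y.2)) := by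
      intro y
      simp only [g, hq, hw]
      ring
    simp only [hgz]
    rw [← mul_sub, norm_mul]
    have key : ‖((w - z.1) ^ 2)⁻¹ * f (w, z.2) - ((w - z'.1) ^ 2)⁻¹ * f (w, z'.2)‖ ≤
        7 * Mf * ‖z - z'‖ := by
      have hsplit : ((w - z.1) ^ 2)⁻¹ * f (w, z.2) - ((w - z'.1) ^ 2)⁻¹ * f (w, z'.2) =
          ((w - z.1) ^ 2)⁻¹ * (f (w, z.2) - f (w, z'.2)) +
          (((w - z.1) ^ 2)⁻¹ - ((w - z'.1) ^ 2)⁻¹) * f (w, z'.2) := by ring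
      rw [hsplit]
      have hP : ‖((w - z.1) ^ 2)⁻¹‖ ≤ 1 := by
        rw [norm_inv, norm_pow]
        have h1 : (1:ℝ) ≤ ‖w - z.1‖ ^ 2 := by nlinarith [honele z.1 hz1.le, norm_nonneg (w - z.1)]
        exact inv_le_one_of_one_le₀ h1
      have hf1 : ‖f (w, z.2) - f (w, z'.2)‖ ≤ Mf * ‖z - z'‖ := by
        calc ‖f (w, z.2) - f (w, z'.2)‖ ≤ Mf * ‖z.2 - z'.2‖ := hlipf θ z.2 z'.2 hz2 hz'2
          _ ≤ Mf * ‖z - z'‖ := mul_le_mul_of_nonneg_left (norm_sub_snd_le _ _) hMf0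
      have hPdiff : ‖((w - z.1) ^ 2)⁻¹ - ((w - z'.1) ^ 2)⁻¹‖ ≤ 6 * ‖z - z'‖ := by
        rw [inv_sub_inv (pow_ne_zero 2 (hne z.1 (hz1.trans one_lt_two))) (pow_ne_zero 2 (hne z'.1 (hz'1.trans one_lt_two)))]
        have hnum : (w - z'.1) ^ 2 - (w - z.1) ^ 2 =
            (z.1 - z'.1) * ((w - z.1) + (w - z'.1)) := by ring
        rw [hnum, norm_div, norm_mul]
        have hden : (1:ℝ) ≤ ‖(w - z.1) ^ 2 * (w - z'.1) ^ 2‖ := by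
          rw [norm_mul, norm_pow, norm_pow]
          have hA2 : (1:ℝ) ≤ ‖w - z.1‖ ^ 2 := one_le_pow₀ (honele z.1 hz1.le)
          have hB2 : (1:ℝ) ≤ ‖w - z'.1‖ ^ 2 := one_le_pow₀ (honele z'.1 hz'1.le)
          calc (1:ℝ) = 1 * 1 := by norm_num
            _ ≤ ‖w - z.1‖ ^ 2 * ‖w - z'.1‖ ^ 2 :=
                mul_le_mul hA2 hB2 one_pos.le (by positivity)
        have hsum : ‖(w - z.1) + (w - z'.1)‖ ≤ 6 := by
          calc ‖(w - z.1) + (w - z'.1)‖ ≤ ‖w - z.1‖ + ‖w - z'.1‖ := norm_add_le _ _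
            _ ≤ 3 + 3 := add_le_add (hwle z.1 hz1.le) (hwle z'.1 hz'1.le)
            _ = 6 := by norm_num
        calc ‖z.1 - z'.1‖ * ‖(w - z.1) + (w - z'.1)‖ / ‖(w - z.1) ^ 2 * (w - z'.1) ^ 2‖ ≤
              ‖z.1 - z'.1‖ * ‖(w - z.1) + (w - z'.1)‖ :=
              div_le_self (by positivity) hden
          _ ≤ ‖z - z'‖ * 6 :=
              mul_le_mul (norm_sub_fst_le _ _) hsum (norm_nonneg _) (norm_nonneg _)
          _ = 6 * ‖z - z'‖ := by ring
      have hFz' : ‖f (w, z'.2)‖ ≤ Mf := hMf _ (hmem3 θ z'.2 (by linarith))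
      calc ‖((w - z.1) ^ 2)⁻¹ * (f (w, z.2) - f (w, z'.2)) +
            (((w - z.1) ^ 2)⁻¹ - ((w - z'.1) ^ 2)⁻¹) * f (w, z'.2)‖ ≤
            ‖((w - z.1) ^ 2)⁻¹‖ * ‖f (w, z.2) - f (w, z'.2)‖ +
            ‖((w - z.1) ^ 2)⁻¹ - ((w - z'.1) ^ 2)⁻¹‖ * ‖f (w, z'.2)‖ := by
            refine le_trans (norm_add_le _ _) ?_
            rw [norm_mul, norm_mul]
        _ ≤ 1 * (Mf * ‖z - z'‖) + 6 * ‖z - z'‖ * Mf := by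
            apply add_le_add
            · exact mul_le_mul hP hf1 (norm_nonneg _) one_pos.le
            · exact mul_le_mul hPdiff hFz' (norm_nonneg _) (by positivity)
        _ = 7 * Mf * ‖z - z'‖ := by ring
    calc ‖q θ‖ * ‖((w - z.1) ^ 2)⁻¹ * f (w, z.2) - ((w - z'.1) ^ 2)⁻¹ * f (w, z'.2)‖ ≤
          1 * (7 * Mf * ‖z - z'‖) := mul_le_mul hq1 key (norm_nonneg _) one_pos.le
      _ = 7 * Mf * ‖z - z'‖ := by ring
  · -- bound integrable
    exact intervalIntegrable_const
  · -- h_diff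
    apply Filter.Eventually.of_forall
    intro θ _
    have hne : circleMap a.1 2 θ - a.1 ≠ 0 := circleMap_sub_ne a a.1 ha1 θ
    have d1 : HasDerivAt (fun t : ℂ => circleMap a.1 2 θ - t) (-1) a.1 :=
      (hasDerivAt_id a.1).const_sub _
    have dsq : HasDerivAt (fun t : ℂ => (circleMap a.1 2 θ - t) ^ 2)
        (2 * (circleMap a.1 2 θ - a.1) ^ 1 * (-1)) a.1 := by
      simpa using d1.fun_pow 2
    have dinv := dsq.inv (pow_ne_zero 2 hne)
    have t1 : HasFDerivAt (fun z : ℂ × ℂ => ((circleMap a.1 2 θ - z.1) ^ 2)⁻¹)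
        ((-(2 * (circleMap a.1 2 θ - a.1) ^ 1 * (-1)) / ((circleMap a.1 2 θ - a.1) ^ 2) ^ 2) •
          ContinuousLinearMap.fst ℂ ℂ ℂ) a :=
      HasDerivAt.comp_hasFDerivAt (h₂ := fun y : ℂ => ((circleMap a.1 2 θ - y) ^ 2)⁻¹) a dinv hasFDerivAt_fst
    have hcurve : HasFDerivAt (fun z : ℂ × ℂ => ((circleMap a.1 2 θ : ℂ), z.2))
        ((0 : (ℂ × ℂ) →L[ℂ] ℂ).prod (ContinuousLinearMap.snd ℂ ℂ ℂ)) a :=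
      (hasFDerivAt_const _ _).prodMk hasFDerivAt_snd
    have t2' := ((hf (circleMap a.1 2 θ, a.2)).hasFDerivAt).comp a hcurve
    have t2 : HasFDerivAt (fun z : ℂ × ℂ => f (circleMap a.1 2 θ, z.2))
        ((pd2 f (circleMap a.1 2 θ, a.2)) • ContinuousLinearMap.snd ℂ ℂ ℂ) a := by
      refine t2'.congr_fderiv (Eq.symm ?_)
      apply ContinuousLinearMap.ext
      intro v
      have hv02 : ((0 : ℂ), v.2) = v.2 • ((0 : ℂ), (1 : ℂ)) := by simp [Prod.smul_def]
      simp only [ContinuousLinearMap.coe_comp', Function.comp_apply,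
        ContinuousLinearMap.prod_apply, ContinuousLinearMap.zero_apply,
        ContinuousLinearMap.coe_snd', ContinuousLinearMap.smul_apply, pd2]
      rw [hv02, _root_.map_smul]
      simp [smul_eq_mul, mul_comm]
    have t3 := t1.fun_mul t2
    have t4 := t3.const_mul (q θ)
    have hfun : (fun z : ℂ × ℂ => q θ * (((circleMap a.1 2 θ - z.1) ^ 2)⁻¹ *
        f (circleMap a.1 2 θ, z.2))) = (fun z : ℂ × ℂ => g f a z θ) := by
      funext y
      simp only [g, hq]
      ring
    rw [hfun] at t4
    simpa only [hF'] using t4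

/-- pd2 as pd1 of the swapped function. -/
lemma pd2_eq_pd1_swap {f : ℂ × ℂ → ℂ} (hf : Differentiable ℂ f) :
    pd2 f = fun z : ℂ × ℂ => pd1 (fun y : ℂ × ℂ => f (y.2, y.1)) (z.2, z.1) := by
  funext z
  have hsw : HasFDerivAt (fun y : ℂ × ℂ => ((y.2 : ℂ), (y.1 : ℂ)))
      ((ContinuousLinearMap.snd ℂ ℂ ℂ).prod (ContinuousLinearMap.fst ℂ ℂ ℂ)) (z.2, z.1) :=
    (hasFDerivAt_snd).prodMk (hasFDerivAt_fst)
  have hfz : HasFDerivAt f (fderiv ℂ f z) ((z.2, z.1).2, (z.2, z.1).1) := by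
    simpa using (hf z).hasFDerivAt
  have hcomp : HasFDerivAt (fun y : ℂ × ℂ => f (y.2, y.1))
      ((fderiv ℂ f z).comp
        ((ContinuousLinearMap.snd ℂ ℂ ℂ).prod (ContinuousLinearMap.fst ℂ ℂ ℂ))) (z.2, z.1) :=
    hfz.comp (z.2, z.1) hsw
  have := hcomp.fderiv
  simp only [pd1, pd2, this]
  simp

lemma pd2_entire {f : ℂ × ℂ → ℂ} (hf : Differentiable ℂ f) : Differentiable ℂ (pd2 f) := by
  rw [pd2_eq_pd1_swap hf]
  have hg : Differentiable ℂ (fun y : ℂ × ℂ => f (y.2, y.1)) :=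
    hf.comp (differentiable_snd.prodMk differentiable_fst)
  exact (pd1_entire hg).comp (differentiable_snd.prodMk differentiable_fst)

lemma pd1_iter_entire {f : ℂ × ℂ → ℂ} (hf : Differentiable ℂ f) (i : ℕ) :
    Differentiable ℂ (pd1^[i] f) := by
  induction i generalizing f with
  | zero => simpa using hf
  | succ i ih =>
    rw [Function.iterate_succ_apply]
    exact ih (pd1_entire hf)

lemma pd2_iter_entire {f : ℂ × ℂ → ℂ} (hf : Differentiable ℂ f) (j : ℕ) :
    Differentiable ℂ (pd2^[j] f) := by
  induction j generalizing f with
  | zero => simpa using hf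
  | succ j ih =>
    rw [Function.iterate_succ_apply]
    exact ih (pd2_entire hf)

/-- sup of ‖f‖ on the closed ball of radius r -/
noncomputable def MB (f : ℂ × ℂ → ℂ) (r : ℝ) : ℝ :=
  sSup ((fun z => ‖f z‖) '' Metric.closedBall (0 : ℂ × ℂ) r)

lemma le_MB {f : ℂ × ℂ → ℂ} (hc : Continuous f) {z : ℂ × ℂ} {r : ℝ} (hz : ‖z‖ ≤ r) :
    ‖f z‖ ≤ MB f r := by
  apply le_csSup
  · exact ((isCompact_closedBall (0 : ℂ × ℂ) r).image hc.norm).bddAbove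
  · exact ⟨z, mem_closedBall_zero_iff.2 hz, rfl⟩

lemma MB_le {f : ℂ × ℂ → ℂ} {r : ℝ} (hr : 0 ≤ r) {C : ℝ}
    (hC : ∀ z : ℂ × ℂ, ‖z‖ ≤ r → ‖f z‖ ≤ C) : MB f r ≤ C := by
  apply csSup_le
  · exact ⟨‖f 0‖, 0, mem_closedBall_zero_iff.2 (by simpa using hr), rfl⟩
  · rintro x ⟨z, hz, rfl⟩
    exact hC z (mem_closedBall_zero_iff.1 hz)

lemma MB_nonneg {f : ℂ × ℂ → ℂ} (hc : Continuous f) {r : ℝ} (hr : 0 ≤ r) : 0 ≤ MB f r :=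
  le_trans (norm_nonneg (f 0)) (le_MB hc (by simpa using hr))

lemma MB_mono {f : ℂ × ℂ → ℂ} (hc : Continuous f) {r r' : ℝ} (hr : 0 ≤ r) (h : r ≤ r') :
    MB f r ≤ MB f r' :=
  MB_le hr fun z hz => le_MB hc (hz.trans h)

lemma MB_pd1_le {f : ℂ × ℂ → ℂ} (hf : Differentiable ℂ f) {r : ℝ} (hr : 0 ≤ r) :
    MB (pd1 f) r ≤ MB f (r + 1) := by
  apply MB_le hr
  intro z hz
  apply norm_pd1_le hf
  intro w hw
  apply le_MB hf.continuous
  calc ‖w‖ = ‖z + (w - z)‖ := by ring_nf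
    _ ≤ ‖z‖ + ‖w - z‖ := norm_add_le _ _
    _ ≤ r + 1 := add_le_add hz hw

lemma MB_pd2_le {f : ℂ × ℂ → ℂ} (hf : Differentiable ℂ f) {r : ℝ} (hr : 0 ≤ r) :
    MB (pd2 f) r ≤ MB f (r + 1) := by
  apply MB_le hr
  intro z hz
  apply norm_pd2_le hf
  intro w hw
  apply le_MB hf.continuous
  calc ‖w‖ = ‖z + (w - z)‖ := by ring_nf
    _ ≤ ‖z‖ + ‖w - z‖ := norm_add_le _ _
    _ ≤ r + 1 := add_le_add hz hw

lemma MB_pd1_iter_le {f : ℂ × ℂ → ℂ} (hf : Differentiable ℂ f) (i : ℕ) :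
    ∀ r : ℝ, 0 ≤ r → MB (pd1^[i] f) r ≤ MB f (r + i) := by
  induction i generalizing f with
  | zero => intro r hr; simp
  | succ i ih =>
    intro r hr
    rw [Function.iterate_succ_apply]
    calc MB (pd1^[i] (pd1 f)) r ≤ MB (pd1 f) (r + i) := ih (pd1_entire hf) r hr
      _ ≤ MB f (r + i + 1) := MB_pd1_le hf (by positivity)
      _ = MB f (r + (i + 1 : ℕ)) := by push_cast; ring_nf

lemma MB_pd2_iter_le {f : ℂ × ℂ → ℂ} (hf : Differentiable ℂ f) (j : ℕ) :
    ∀ r : ℝ, 0 ≤ r → MB (pd2^[j] f) r ≤ MB f (r + j) := by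
  induction j generalizing f with
  | zero => intro r hr; simp
  | succ j ih =>
    intro r hr
    rw [Function.iterate_succ_apply]
    calc MB (pd2^[j] (pd2 f)) r ≤ MB (pd2 f) (r + j) := ih (pd2_entire hf) r hr
      _ ≤ MB f (r + j + 1) := MB_pd2_le hf (by positivity)
      _ = MB f (r + (j + 1 : ℕ)) := by push_cast; ring_nf

lemma contract_iter {v : ℝ → ℝ} {θ d E : ℝ} (hθ0 : 0 ≤ θ) (hθ1 : θ < 1) (hE : 0 ≤ E)
    (hd : 0 ≤ d) (h : ∀ r : ℝ, 0 ≤ r → v r ≤ θ * v (r + d) + E) :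
    ∀ (k : ℕ) (r : ℝ), 0 ≤ r → v r ≤ θ ^ k * v (r + d * k) + E / (1 - θ) := by
  intro k
  induction k with
  | zero =>
    intro r hr
    have : 0 ≤ E / (1 - θ) := div_nonneg hE (by linarith)
    simpa using this
  | succ k ih =>
    intro r hr
    have harg : r + d + d * k = r + d * (k + 1 : ℕ) := by push_cast; ring
    have h1θ : (1 : ℝ) - θ ≠ 0 := by linarith
    calc v r ≤ θ * v (r + d) + E := h r hr
      _ ≤ θ * (θ ^ k * v (r + d + d * k) + E / (1 - θ)) + E := by
          apply add_le_add_left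
          exact mul_le_mul_of_nonneg_left (ih (r + d) (by linarith)) hθ0
      _ = θ ^ (k + 1 : ℕ) * v (r + d + d * k) + (θ * (E / (1 - θ)) + E) := by ring
      _ = θ ^ (k + 1 : ℕ) * v (r + d * (k + 1 : ℕ)) + E / (1 - θ) := by
          rw [harg]
          congr 1
          field_simp
          ring

lemma tendsto_geom_rpow {θ ρ A B : ℝ} (hθ0 : 0 < θ) (hθ1 : θ < 1) (hA : 0 ≤ A) (hB : 1 ≤ B)
    (hρ : 0 < ρ) : Tendsto (fun k : ℕ => θ ^ k * (A + B * k) ^ ρ) atTop (𝓝 0) := by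
  set m : ℕ := ⌈ρ⌉₊ with hm
  have hmain : Tendsto (fun k : ℕ => (A + B) ^ m * ((k : ℝ) ^ m * θ ^ k)) atTop (𝓝 0) := by
    have := tendsto_pow_const_mul_const_pow_of_lt_one m hθ0.le hθ1
    simpa using this.const_mul ((A + B) ^ m)
  apply squeeze_zero' (f := fun k : ℕ => θ ^ k * (A + B * k) ^ ρ)
    (g := fun k : ℕ => (A + B) ^ m * ((k : ℝ) ^ m * θ ^ k)) ?_ ?_ hmain
  · apply Filter.Eventually.of_forall
    intro k
    positivity
  · rw [eventually_atTop]
    refine ⟨1, fun k hk => ?_⟩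
    have hk1 : (1 : ℝ) ≤ (k : ℝ) := by exact_mod_cast hk
    have h1 : A + B * k ≤ (A + B) * k := by nlinarith
    have h2 : (1:ℝ) ≤ A + B * k := by nlinarith
    have h3 : (A + B * k) ^ ρ ≤ (A + B * k) ^ (m : ℝ) := by
      apply Real.rpow_le_rpow_of_exponent_le h2
      rw [hm]
      exact Nat.le_ceil ρ
    have h4 : (A + B * k) ^ (m : ℝ) = (A + B * k) ^ m := by
      rw [Real.rpow_natCast]
    have h5 : (A + B * k) ^ m ≤ ((A + B) * k) ^ m := by
      apply pow_le_pow_left₀ (by linarith) h1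
    calc θ ^ k * (A + B * k) ^ ρ ≤ θ ^ k * ((A + B) * k) ^ m := by
          apply mul_le_mul_of_nonneg_left _ (by positivity)
          rw [← h4] at h5
          exact h3.trans h5
      _ = (A + B) ^ m * ((k : ℝ) ^ m * θ ^ k) := by rw [mul_pow]; ring


lemma norm_partialI_le {f : ℂ × ℂ → ℂ} (hf : Differentiable ℂ f) (i j : ℕ) (z : ℂ × ℂ) :
    ‖partialI i j f z‖ ≤ MB f (‖z‖ + i + j) := by
  have hj : Differentiable ℂ (pd2^[j] f) := pd2_iter_entire hf j
  calc ‖partialI i j f z‖ ≤ MB (pd1^[i] (pd2^[j] f)) ‖z‖ :=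
        le_MB (pd1_iter_entire hj i).continuous le_rfl
    _ ≤ MB (pd2^[j] f) (‖z‖ + i) := MB_pd1_iter_le hj i ‖z‖ (norm_nonneg z)
    _ ≤ MB f (‖z‖ + i + j) := MB_pd2_iter_le hf j (‖z‖ + i) (by positivity)

lemma rpow_root_le {x T : ℝ} {m : ℕ} (hm : 0 < m) (hx : 0 ≤ x) (hT : 1 ≤ T)
    (h : x ^ m ≤ T) : x ≤ T ^ ((m : ℝ)⁻¹) := by
  have hm' : (m : ℝ) ≠ 0 := Nat.cast_ne_zero.2 hm.ne'
  have h1 : (x ^ m : ℝ) ^ ((m : ℝ)⁻¹) ≤ T ^ ((m : ℝ)⁻¹) :=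
    Real.rpow_le_rpow (by positivity) h (by positivity)
  rwa [← Real.rpow_natCast x m, ← Real.rpow_mul hx, mul_inv_cancel₀ hm', Real.rpow_one] at h1

/-- Key growth-transfer estimate from one equation of the system. -/
lemma step_bound {f p : ℂ × ℂ → ℂ} (hf : Differentiable ℂ f) (hp : Continuous p)
    (a b : ℂ) (i₁ i₂ j₁ j₂ : ℕ) (c : ℂ × ℂ) {n m : ℕ} (hm : 0 < m)
    (heq : ∀ z : ℂ × ℂ, (a * partialI i₁ i₂ f z + b * partialI j₁ j₂ f z) ^ n + p (z + c) ^ m = 1) :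
    ∀ r : ℝ, 0 ≤ r →
      Real.log (max 1 (MB p r)) ≤
        ((n : ℝ) / m) * Real.log (max 1 (MB f (r + (‖c‖ + ((i₁ + i₂ + j₁ + j₂ : ℕ) : ℝ) + 1)))) +
          Real.log (1 + (‖a‖ + ‖b‖ + 1) ^ n) / m := by
  intro r hr
  set s : ℝ := ‖c‖ + ((i₁ + i₂ + j₁ + j₂ : ℕ) : ℝ) + 1 with hs
  set K : ℝ := ‖a‖ + ‖b‖ + 1 with hK
  have hK1 : 1 ≤ K := by
    rw [hK]
    have := norm_nonneg a; have := norm_nonneg b; linarith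
  set X : ℝ := max 1 (MB f (r + s)) with hX
  have hX1 : 1 ≤ X := le_max_left _ _
  have hs1 : 1 ≤ s := by
    rw [hs]
    have := norm_nonneg c
    have : (0:ℝ) ≤ ((i₁ + i₂ + j₁ + j₂ : ℕ) : ℝ) := Nat.cast_nonneg _
    linarith [norm_nonneg c]
  set T : ℝ := (1 + K ^ n) * X ^ n with hT
  have hT1 : 1 ≤ T := by
    rw [hT]
    have h1 : (1:ℝ) ≤ 1 + K ^ n := by
      have : (0:ℝ) ≤ K ^ n := by positivity
      linarith
    have h2 : (1:ℝ) ≤ X ^ n := one_le_pow₀ hX1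
    nlinarith
  -- pointwise bound
  have hpt : ∀ w : ℂ × ℂ, ‖w‖ ≤ r → ‖p w‖ ≤ T ^ ((m : ℝ)⁻¹) := by
    intro w hw
    apply rpow_root_le hm (norm_nonneg _) hT1
    have hzc : (w - c) + c = w := by ring
    have he := heq (w - c)
    rw [hzc] at he
    have hpw : p w ^ m = 1 - (a * partialI i₁ i₂ f (w - c) + b * partialI j₁ j₂ f (w - c)) ^ n := by
      linear_combination he
    have hL : ‖a * partialI i₁ i₂ f (w - c) + b * partialI j₁ j₂ f (w - c)‖ ≤ K * X := by
      have hnz : ‖w - c‖ ≤ r + ‖c‖ := norm_sub_le _ _ |>.trans (by linarith [hw])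
      have hb1 : ‖partialI i₁ i₂ f (w - c)‖ ≤ X := by
        refine le_trans (norm_partialI_le hf i₁ i₂ _) (le_trans ?_ (le_max_right _ _))
        apply MB_mono hf.continuous (by positivity)
        rw [hs]
        push_cast
        linarith
      have hb2 : ‖partialI j₁ j₂ f (w - c)‖ ≤ X := by
        refine le_trans (norm_partialI_le hf j₁ j₂ _) (le_trans ?_ (le_max_right _ _))
        apply MB_mono hf.continuous (by positivity)
        rw [hs]
        push_cast
        linarith
      calc ‖a * partialI i₁ i₂ f (w - c) + b * partialI j₁ j₂ f (w - c)‖ ≤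
            ‖a‖ * ‖partialI i₁ i₂ f (w - c)‖ + ‖b‖ * ‖partialI j₁ j₂ f (w - c)‖ := by
            refine le_trans (norm_add_le _ _) ?_
            rw [norm_mul, norm_mul]
        _ ≤ ‖a‖ * X + ‖b‖ * X := by
            apply add_le_add
            · exact mul_le_mul_of_nonneg_left hb1 (norm_nonneg a)
            · exact mul_le_mul_of_nonneg_left hb2 (norm_nonneg b)
        _ ≤ K * X := by
            rw [hK]
            nlinarith [norm_nonneg a, norm_nonneg b]
    calc ‖p w‖ ^ m = ‖p w ^ m‖ := by rw [norm_pow]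
      _ = ‖1 - (a * partialI i₁ i₂ f (w - c) + b * partialI j₁ j₂ f (w - c)) ^ n‖ := by rw [hpw]
      _ ≤ ‖(1 : ℂ)‖ + ‖(a * partialI i₁ i₂ f (w - c) + b * partialI j₁ j₂ f (w - c)) ^ n‖ :=
          norm_sub_le _ _
      _ = 1 + ‖a * partialI i₁ i₂ f (w - c) + b * partialI j₁ j₂ f (w - c)‖ ^ n := by
          rw [norm_one, norm_pow]
      _ ≤ 1 + (K * X) ^ n := by
          have := pow_le_pow_left₀ (norm_nonneg _) hL n
          linarith
      _ ≤ T := by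
          rw [hT, mul_pow]
          have h2 : (1:ℝ) ≤ X ^ n := one_le_pow₀ hX1
          nlinarith [pow_nonneg (by linarith : (0:ℝ) ≤ K) n]
  -- from pointwise bound to MB and logs
  have hMB : max 1 (MB p r) ≤ T ^ ((m : ℝ)⁻¹) := by
    apply max_le
    · calc (1:ℝ) = 1 ^ ((m:ℝ)⁻¹) := by rw [Real.one_rpow]
        _ ≤ T ^ ((m:ℝ)⁻¹) := Real.rpow_le_rpow one_pos.le hT1 (by positivity)
    · exact MB_le hr hpt
  have hTpos : (0:ℝ) < T := lt_of_lt_of_le one_pos hT1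
  calc Real.log (max 1 (MB p r)) ≤ Real.log (T ^ ((m : ℝ)⁻¹)) :=
        Real.log_le_log (by positivity) hMB
    _ = (m : ℝ)⁻¹ * Real.log T := Real.log_rpow hTpos _
    _ = (m : ℝ)⁻¹ * (Real.log (1 + K ^ n) + (n : ℝ) * Real.log X) := by
        rw [hT, Real.log_mul (by positivity) (by positivity), Real.log_pow]
    _ = ((n : ℝ) / m) * Real.log X + Real.log (1 + K ^ n) / m := by ring


/-- a transcendental entire function is not constant -/
lemma not_const_of_transcendental {f : ℂ × ℂ → ℂ} (ht : Transcendental2 f)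
    (h : ∃ k : ℂ, ∀ z, f z = k) : False := by
  obtain ⟨k, hk⟩ := h
  exact ht ⟨MvPolynomial.C k, fun z => by rw [hk z, MvPolynomial.eval_C]⟩

/-- finite order gives a polynomial bound on `log (max 1 (MB f t))` -/
lemma finite_order_v_bound {f : ℂ × ℂ → ℂ} (hc : Continuous f) {ρ R : ℝ} (hρ : 0 < ρ)
    (hR : 0 < R) (hb : ∀ z : ℂ × ℂ, R ≤ ‖z‖ → ‖f z‖ ≤ Real.exp (‖z‖ ^ ρ)) :
    ∀ t : ℝ, R ≤ t → Real.log (max 1 (MB f t)) ≤ t ^ ρ + Real.log (max 1 (MB f R)) := by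
  intro t ht
  have ht0 : 0 ≤ t := le_trans hR.le ht
  have hMR1 : (1:ℝ) ≤ max 1 (MB f R) := le_max_left _ _
  have hexp1 : (1:ℝ) ≤ Real.exp (t ^ ρ) := Real.one_le_exp (by positivity)
  have hMB : MB f t ≤ Real.exp (t ^ ρ) * max 1 (MB f R) := by
    apply MB_le ht0
    intro z hz
    rcases le_or_gt R ‖z‖ with h | h
    · calc ‖f z‖ ≤ Real.exp (‖z‖ ^ ρ) := hb z h
        _ ≤ Real.exp (t ^ ρ) := by
            apply Real.exp_le_exp.2
            exact Real.rpow_le_rpow (norm_nonneg z) hz hρ.le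
        _ ≤ Real.exp (t ^ ρ) * max 1 (MB f R) := le_mul_of_one_le_right (by positivity) hMR1
    · calc ‖f z‖ ≤ MB f R := le_MB hc h.le
        _ ≤ max 1 (MB f R) := le_max_right _ _
        _ ≤ Real.exp (t ^ ρ) * max 1 (MB f R) := le_mul_of_one_le_left (by linarith) hexp1
  have hmax : max 1 (MB f t) ≤ Real.exp (t ^ ρ) * max 1 (MB f R) := by
    apply max_le _ hMB
    calc (1:ℝ) = 1 * 1 := by norm_num
      _ ≤ Real.exp (t ^ ρ) * max 1 (MB f R) := mul_le_mul hexp1 hMR1 one_pos.le (by positivity)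
  calc Real.log (max 1 (MB f t)) ≤ Real.log (Real.exp (t ^ ρ) * max 1 (MB f R)) :=
        Real.log_le_log (by positivity) hmax
    _ = t ^ ρ + Real.log (max 1 (MB f R)) := by
        rw [Real.log_mul (by positivity) (by linarith), Real.log_exp]

lemma main (c : ℂ × ℂ) (α₁ α₂ β₁ β₂ : ℕ) (a b : ℂ) (hab : ¬(a = 0 ∧ b = 0))
    (m₁ m₂ n₁ n₂ : ℕ) (hm₁ : 0 < m₁) (hm₂ : 0 < m₂) (hn₁ : 0 < n₁) (hn₂ : 0 < n₂)
    (hmn : m₁ * m₂ > n₁ * n₂) :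
    ¬ ∃ f₁ f₂ : ℂ × ℂ → ℂ,
      Entire2 f₁ ∧ Transcendental2 f₁ ∧ FiniteOrder2 f₁ ∧
      Entire2 f₂ ∧ Transcendental2 f₂ ∧ FiniteOrder2 f₂ ∧
      (∀ z : ℂ × ℂ,
        (a * partialI α₁ α₂ f₁ z + b * partialI β₁ β₂ f₁ z) ^ n₁ + f₂ (z + c) ^ m₁ = 1) ∧
      (∀ z : ℂ × ℂ,
        (a * partialI α₁ α₂ f₂ z + b * partialI β₁ β₂ f₂ z) ^ n₂ + f₁ (z + c) ^ m₂ = 1) := by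
  rintro ⟨f₁, f₂, h1e, h1t, h1o, h2e, h2t, h2o, heq1, heq2⟩
  -- abbreviations
  set s : ℝ := ‖c‖ + ((α₁ + α₂ + β₁ + β₂ : ℕ) : ℝ) + 1 with hs
  have hs1 : 1 ≤ s := by
    have : (0:ℝ) ≤ ((α₁ + α₂ + β₁ + β₂ : ℕ) : ℝ) := Nat.cast_nonneg _
    rw [hs]; linarith [norm_nonneg c]
  set K : ℝ := ‖a‖ + ‖b‖ + 1 with hK
  set v : ℝ → ℝ := fun r => Real.log (max 1 (MB f₂ r)) with hv
  set u : ℝ → ℝ := fun r => Real.log (max 1 (MB f₁ r)) with hu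
  set D₁ : ℝ := Real.log (1 + K ^ n₁) / m₁ with hD₁
  set D₂ : ℝ := Real.log (1 + K ^ n₂) / m₂ with hD₂
  have hK0 : (0:ℝ) ≤ K := by rw [hK]; positivity
  have hD₁0 : 0 ≤ D₁ := by
    rw [hD₁]
    apply div_nonneg _ (Nat.cast_nonneg _)
    apply Real.log_nonneg
    have : (0:ℝ) ≤ K ^ n₁ := by positivity
    linarith
  have hD₂0 : 0 ≤ D₂ := by
    rw [hD₂]
    apply div_nonneg _ (Nat.cast_nonneg _)
    apply Real.log_nonneg
    have : (0:ℝ) ≤ K ^ n₂ := by positivity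
    linarith
  have hvnonneg : ∀ r : ℝ, 0 ≤ v r := fun r => Real.log_nonneg (le_max_left _ _)
  have hunonneg : ∀ r : ℝ, 0 ≤ u r := fun r => Real.log_nonneg (le_max_left _ _)
  -- the two step bounds
  have hstep1 : ∀ r : ℝ, 0 ≤ r → v r ≤ ((n₁ : ℝ) / m₁) * u (r + s) + D₁ :=
    step_bound h1e h2e.continuous a b α₁ α₂ β₁ β₂ c hm₁ heq1
  have hstep2 : ∀ r : ℝ, 0 ≤ r → u r ≤ ((n₂ : ℝ) / m₂) * v (r + s) + D₂ :=
    step_bound h2e h1e.continuous a b α₁ α₂ β₁ β₂ c hm₂ heq2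
  -- combine
  set θ : ℝ := ((n₁ : ℝ) * n₂) / ((m₁ : ℝ) * m₂) with hθ
  set E : ℝ := ((n₁ : ℝ) / m₁) * D₂ + D₁ with hE
  have hm₁' : (0:ℝ) < m₁ := by exact_mod_cast hm₁
  have hm₂' : (0:ℝ) < m₂ := by exact_mod_cast hm₂
  have hn₁' : (0:ℝ) < n₁ := by exact_mod_cast hn₁
  have hn₂' : (0:ℝ) < n₂ := by exact_mod_cast hn₂
  have hθ0 : 0 < θ := by rw [hθ]; positivity
  have hθ1 : θ < 1 := by
    rw [hθ, div_lt_one (by positivity)]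
    have : (n₁ : ℝ) * n₂ < (m₁ : ℝ) * m₂ := by exact_mod_cast hmn
    linarith
  have hE0 : 0 ≤ E := by rw [hE]; positivity
  have hcomb : ∀ r : ℝ, 0 ≤ r → v r ≤ θ * v (r + 2 * s) + E := by
    intro r hr
    calc v r ≤ ((n₁ : ℝ) / m₁) * u (r + s) + D₁ := hstep1 r hr
      _ ≤ ((n₁ : ℝ) / m₁) * (((n₂ : ℝ) / m₂) * v (r + s + s) + D₂) + D₁ := by
          apply add_le_add_left
          apply mul_le_mul_of_nonneg_left (hstep2 (r + s) (by linarith)) (by positivity)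
      _ = θ * v (r + s + s) + E := by
          rw [hθ, hE]
          field_simp
          ring
      _ = θ * v (r + 2 * s) + E := by
          rw [show r + s + s = r + 2 * s by ring]
  -- iterate
  have hiter := contract_iter hθ0.le hθ1 hE0 (by linarith : (0:ℝ) ≤ 2 * s) hcomb
  -- finite order of f₂
  obtain ⟨ρ, hρ, R, hR, hb⟩ := h2o
  have hvb := finite_order_v_bound h2e.continuous hρ hR hb
  set W : ℝ := v R + E / (1 - θ) with hW
  -- v is bounded by W
  have hVbound : ∀ r : ℝ, 0 ≤ r → v r ≤ W := by
    intro r hr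
    have hlim : Tendsto (fun k : ℕ => θ ^ k * (r + 2 * s * k) ^ ρ + W) atTop (𝓝 (0 + W)) :=
      (tendsto_geom_rpow hθ0 hθ1 hr (by linarith) hρ).add_const W
    rw [zero_add] at hlim
    apply ge_of_tendsto hlim
    rw [eventually_atTop]
    refine ⟨⌈R⌉₊, fun k hk => ?_⟩
    have hkR : R ≤ r + 2 * s * k := by
      have h1 : R ≤ (⌈R⌉₊ : ℝ) := Nat.le_ceil R
      have h2 : ((⌈R⌉₊ : ℕ) : ℝ) ≤ (k : ℝ) := by exact_mod_cast hk
      have h3 : (k : ℝ) ≤ 2 * s * k := by nlinarith [Nat.cast_nonneg (α := ℝ) k]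
      linarith
    have h1 := hiter k r hr
    have h2 := hvb (r + 2 * s * k) hkR
    have hθk1 : θ ^ k ≤ 1 := pow_le_one₀ hθ0.le hθ1.le
    have hθk0 : 0 ≤ θ ^ k := by positivity
    have hrk : (0:ℝ) ≤ (r + 2 * s * k) ^ ρ := by
      apply Real.rpow_nonneg
      have : (0:ℝ) ≤ (k:ℝ) := Nat.cast_nonneg _
      nlinarith
    calc v r ≤ θ ^ k * v (r + 2 * s * k) + E / (1 - θ) := h1
      _ ≤ θ ^ k * ((r + 2 * s * k) ^ ρ + v R) + E / (1 - θ) := by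
          apply add_le_add_left
          exact mul_le_mul_of_nonneg_left h2 hθk0
      _ = θ ^ k * (r + 2 * s * k) ^ ρ + θ ^ k * v R + E / (1 - θ) := by ring
      _ ≤ θ ^ k * (r + 2 * s * k) ^ ρ + v R + E / (1 - θ) := by
          have : θ ^ k * v R ≤ v R := by
            nlinarith [hvnonneg R]
          linarith
      _ = θ ^ k * (r + 2 * s * k) ^ ρ + W := by rw [hW]; ring
  -- f₂ is bounded, hence constant
  have hbdd : ∀ z : ℂ × ℂ, ‖f₂ z‖ ≤ Real.exp W := by
    intro z
    have h1 : ‖f₂ z‖ ≤ max 1 (MB f₂ ‖z‖) :=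
      le_trans (le_MB h2e.continuous le_rfl) (le_max_right _ _)
    have h2 : max 1 (MB f₂ ‖z‖) = Real.exp (v ‖z‖) := by
      rw [hv]
      rw [Real.exp_log (lt_of_lt_of_le one_pos (le_max_left _ _))]
    rw [h2] at h1
    exact le_trans h1 (Real.exp_le_exp.2 (hVbound ‖z‖ (norm_nonneg z)))
  have hrange : Bornology.IsBounded (Set.range f₂) := by
    rw [Metric.isBounded_iff_subset_closedBall 0]
    refine ⟨Real.exp W, ?_⟩
    rintro x ⟨z, rfl⟩
    rw [mem_closedBall_zero_iff]
    exact hbdd z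
  have hconst := h2e.exists_const_forall_eq_of_bounded hrange
  exact not_const_of_transcendental h2t hconst

end My

theorem stmt_3 (c : ℂ × ℂ) (α₁ α₂ β₁ β₂ : ℕ) (a b : ℂ) (hab : ¬(a = 0 ∧ b = 0))
    (m₁ m₂ n₁ n₂ : ℕ) (hm₁ : 0 < m₁) (hm₂ : 0 < m₂) (hn₁ : 0 < n₁) (hn₂ : 0 < n₂)
    (hmn : m₁ * m₂ > n₁ * n₂) :
    ¬ ∃ f₁ f₂ : ℂ × ℂ → ℂ,
      Entire2 f₁ ∧ Transcendental2 f₁ ∧ FiniteOrder2 f₁ ∧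
      Entire2 f₂ ∧ Transcendental2 f₂ ∧ FiniteOrder2 f₂ ∧
      (∀ z : ℂ × ℂ,
        (a * partialI α₁ α₂ f₁ z + b * partialI β₁ β₂ f₁ z) ^ n₁ + f₂ (z + c) ^ m₁ = 1) ∧
      (∀ z : ℂ × ℂ,
        (a * partialI α₁ α₂ f₂ z + b * partialI β₁ β₂ f₂ z) ^ n₂ + f₁ (z + c) ^ m₂ = 1) :=
  My.main c α₁ α₂ β₁ β₂ a b hab m₁ m₂ n₁ n₂ hm₁ hm₂ hn₁ hn₂ hmn
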